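/- Let μ be the natural probability measure on the middle-third Cantor set (the Hausdorff measure of dimension γ = log 2 / log 3 restricted to the Cantor set). Let y ∈ ℝ, n ∈ ℕ, and σ ∈ (0, 1/2). Define A_n^y(σ) = {x ∈ ℝ : ‖2^n x − y‖ < σ}. Then μ(A_n^y(σ)) ≤ c·σ^γ for some absolute constant c > 0. -/

import Mathlib

open MeasureTheory

/-- the Hausdorff dimension of the middle-third Cantor set -/
noncomputable def cantorDim : ℝ := Real.log 2 / Real.log 3

/-- the natural measure on the middle-third Cantor set: the `γ`-dimensional
Hausdorff measure restricted to the Cantor set -/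
noncomputable def cantorMeasure : Measure ℝ := μH[cantorDim].restrict cantorSet

/-- distance from `x` to the nearest integer -/
noncomputable def nint (x : ℝ) : ℝ := |x - round x|

/-- `A_n^y(σ) = {x : ‖2^n x - y‖ < σ}` -/
def approxSet (n : ℕ) (y σ : ℝ) : Set ℝ := {x : ℝ | nint (2 ^ n * x - y) < σ}

open Set Filter Pointwise
open scoped ENNReal NNReal

section Aux

/-- left endpoints of the level-`l` intervals in the Cantor construction -/
noncomputable def cpts : ℕ → Finset ℝ
  | 0 => {0}
  | (l+1) => (cpts l).image (· / 3) ∪ (cpts l).image (fun a => (2 + a) / 3)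

lemma cpts_mem_Icc : ∀ l, ∀ b ∈ cpts l, b ∈ Set.Icc (0:ℝ) (1 - (1/3)^l) := by
  intro l
  induction l with
  | zero => intro b hb; simp [cpts] at hb; simp [hb]
  | succ l ih =>
    intro b hb
    simp only [cpts, Finset.mem_union, Finset.mem_image] at hb
    rcases hb with ⟨a, ha, rfl⟩ | ⟨a, ha, rfl⟩ <;> rcases ih a ha with ⟨h1, h2⟩ <;>
      constructor <;> nlinarith [pow_succ ((1:ℝ)/3) l, pow_pos (by norm_num : (0:ℝ) < 1/3) l]

lemma cpts_sep : ∀ l, ∀ b ∈ cpts l, ∀ b' ∈ cpts l, b ≠ b' → 2 * (1/3:ℝ)^l ≤ |b - b'| := by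
  intro l
  induction l with
  | zero => intro b hb b' hb' hne; simp [cpts] at hb hb'; exact absurd (hb.trans hb'.symm) hne
  | succ l ih =>
    intro b hb b' hb' hne
    simp only [cpts, Finset.mem_union, Finset.mem_image] at hb hb'
    have key : ∀ a a' : ℝ, a ∈ cpts l → a' ∈ cpts l →
        2 * (1/3:ℝ)^(l+1) ≤ |a / 3 - (2 + a') / 3| := by
      intro a a' ha ha'
      rcases cpts_mem_Icc l a ha with ⟨h1, h2⟩
      rcases cpts_mem_Icc l a' ha' with ⟨h1', h2'⟩
      have hp := pow_pos (by norm_num : (0:ℝ) < 1/3) (l+1)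
      have : a / 3 - (2 + a') / 3 ≤ -(2 * (1/3)^(l+1)) := by
        nlinarith [pow_succ ((1:ℝ)/3) l]
      rw [abs_sub_comm, abs_of_nonneg (by linarith)]
      linarith
    rcases hb with ⟨a, ha, rfl⟩ | ⟨a, ha, rfl⟩ <;> rcases hb' with ⟨a', ha', rfl⟩ | ⟨a', ha', rfl⟩
    · have hne' : a ≠ a' := fun h => hne (by rw [h])
      have := ih a ha a' ha' hne'
      have : 2 * (1/3:ℝ)^l ≤ |a - a'| := this
      calc 2 * (1/3:ℝ)^(l+1) = (2 * (1/3)^l) / 3 := by ring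
        _ ≤ |a - a'| / 3 := by linarith
        _ = |a/3 - a'/3| := by
            rw [show a/3 - a'/3 = (a - a')/3 by ring, abs_div]
            norm_num
    · exact key a a' ha ha'
    · rw [abs_sub_comm]; exact key a' a ha' ha
    · have hne' : a ≠ a' := fun h => hne (by rw [h])
      have := ih a ha a' ha' hne'
      calc 2 * (1/3:ℝ)^(l+1) = (2 * (1/3)^l) / 3 := by ring
        _ ≤ |a - a'| / 3 := by linarith
        _ = |(2+a)/3 - (2+a')/3| := by
            rw [show (2+a)/3 - (2+a')/3 = (a - a')/3 by ring, abs_div]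
            norm_num

lemma cpts_card (l : ℕ) : (cpts l).card ≤ 2 ^ l := by
  induction l with
  | zero => simp [cpts]
  | succ l ih =>
    calc (cpts (l+1)).card ≤ ((cpts l).image (· / 3)).card + ((cpts l).image (fun a => (2+a)/3)).card :=
          Finset.card_union_le _ _
      _ ≤ (cpts l).card + (cpts l).card :=
          add_le_add Finset.card_image_le Finset.card_image_le
      _ ≤ 2^l + 2^l := by gcongr
      _ = 2^(l+1) := by ring

lemma preCantorSet_subset_cover : ∀ l, preCantorSet l ⊆ ⋃ b ∈ cpts l, Set.Icc b (b + (1/3)^l) := by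
  intro l
  induction l with
  | zero => intro x hx; simp [cpts]; simpa using hx
  | succ l ih =>
    intro x hx
    simp only [preCantorSet_succ, Set.mem_union, Set.mem_image] at hx
    simp only [Set.mem_iUnion, cpts, Finset.mem_union, Finset.mem_image]
    rcases hx with ⟨z, hz, rfl⟩ | ⟨z, hz, rfl⟩
    · obtain ⟨b, hb, h1, h2⟩ := by simpa only [Set.mem_iUnion, Set.mem_Icc] using ih hz
      exact ⟨b/3, ⟨Or.inl ⟨b, hb, rfl⟩, by
        constructor <;> nlinarith [pow_succ ((1:ℝ)/3) l]⟩⟩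
    · obtain ⟨b, hb, h1, h2⟩ := by simpa only [Set.mem_iUnion, Set.mem_Icc] using ih hz
      exact ⟨(2+b)/3, ⟨Or.inr ⟨b, hb, rfl⟩, by
        constructor <;> nlinarith [pow_succ ((1:ℝ)/3) l]⟩⟩

lemma cantorSet_subset_cover (l : ℕ) : cantorSet ⊆ ⋃ b ∈ cpts l, Set.Icc b (b + (1/3)^l) :=
  (Set.iInter_subset _ l).trans (preCantorSet_subset_cover l)

lemma cpts_subset_cantorSet : ∀ l, ∀ b ∈ cpts l, b ∈ cantorSet := by
  intro l
  induction l with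
  | zero => intro b hb; simp [cpts] at hb; simp [hb, zero_mem_cantorSet]
  | succ l ih =>
    have hdiv : ∀ x ∈ cantorSet, x / 3 ∈ cantorSet := by
      intro x hx
      refine Set.mem_iInter.mpr fun n => ?_
      cases n with
      | zero =>
        have := cantorSet_subset_unitInterval hx
        simp only [preCantorSet_zero, Set.mem_Icc] at this ⊢
        constructor <;> nlinarith [this.1, this.2]
      | succ n => exact Or.inl ⟨x, Set.mem_iInter.mp hx n, rfl⟩
    have hdiv2 : ∀ x ∈ cantorSet, (2 + x) / 3 ∈ cantorSet := by
      intro x hx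
      refine Set.mem_iInter.mpr fun n => ?_
      cases n with
      | zero =>
        have := cantorSet_subset_unitInterval hx
        simp only [preCantorSet_zero, Set.mem_Icc] at this ⊢
        constructor <;> nlinarith [this.1, this.2]
      | succ n => exact Or.inr ⟨x, Set.mem_iInter.mp hx n, rfl⟩
    intro b hb
    simp only [cpts, Finset.mem_union, Finset.mem_image] at hb
    rcases hb with ⟨a, ha, rfl⟩ | ⟨a, ha, rfl⟩
    · exact hdiv a (ih a ha)
    · exact hdiv2 a (ih a ha)


lemma cpts_def_zero : cpts 0 = {0} := rfl
lemma cpts_def_succ (l : ℕ) :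
    cpts (l+1) = (cpts l).image (· / 3) ∪ (cpts l).image (fun a => (2 + a) / 3) := rfl

lemma gamma_pos : 0 < cantorDim :=
  div_pos (Real.log_pos (by norm_num)) (Real.log_pos (by norm_num))

lemma gamma_lt_one : cantorDim < 1 :=
  (div_lt_one (Real.log_pos (by norm_num))).mpr
    (Real.log_lt_log (by norm_num) (by norm_num))

lemma three_rpow : (3:ℝ) ^ cantorDim = 2 := by
  rw [cantorDim, Real.rpow_def_of_pos (by norm_num)]
  rw [show Real.log 3 * (Real.log 2 / Real.log 3) = Real.log 2 by
    field_simp]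
  exact Real.exp_log (by norm_num)

lemma third_rpow : ((1:ℝ)/3) ^ cantorDim = 1/2 := by
  rw [one_div, one_div, Real.inv_rpow (by norm_num), three_rpow]

lemma third_pow_rpow (l : ℕ) : (((1:ℝ)/3)^l) ^ cantorDim = ((1:ℝ)/2)^l := by
  rw [← Real.rpow_natCast ((1:ℝ)/3) l, ← Real.rpow_natCast ((1:ℝ)/2) l,
    ← Real.rpow_mul (by norm_num), mul_comm, Real.rpow_mul (by norm_num), third_rpow]

lemma preCantorSet_subset_unitInterval' : ∀ n, preCantorSet n ⊆ Set.Icc (0:ℝ) 1 := by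
  intro n
  induction n with
  | zero => exact subset_rfl
  | succ n ih =>
    rintro x (⟨z, hz, rfl⟩ | ⟨z, hz, rfl⟩) <;> rcases ih hz with ⟨h1, h2⟩ <;>
      exact ⟨by norm_num; linarith, by norm_num; linarith⟩

lemma cantorSet_selfSimilar :
    cantorSet ⊆ (· / 3) '' cantorSet ∪ (fun x => (2 + x) / 3) '' cantorSet := by
  intro x hx
  have h1 : x ∈ preCantorSet 1 := Set.mem_iInter.mp hx 1
  have hcases : x ≤ 1/3 ∨ 2/3 ≤ x := by
    rcases h1 with ⟨z, hz, rfl⟩ | ⟨z, hz, rfl⟩ <;> rcases hz with ⟨hz1, hz2⟩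
    · left; linarith
    · right; linarith
  rcases hcases with hc | hc
  · left
    refine ⟨3 * x, ?_, by ring⟩
    refine Set.mem_iInter.mpr fun n => ?_
    have hxn : x ∈ preCantorSet (n+1) := Set.mem_iInter.mp hx (n+1)
    rcases hxn with ⟨p, hp, rfl⟩ | ⟨q, hq, rfl⟩
    · rw [show 3 * (p/3) = p by ring]; exact hp
    · rcases preCantorSet_subset_unitInterval' n hq with ⟨h1', h2'⟩
      exfalso; linarith
  · right
    refine ⟨3 * x - 2, ?_, by ring⟩
    refine Set.mem_iInter.mpr fun n => ?_
    have hxn : x ∈ preCantorSet (n+1) := Set.mem_iInter.mp hx (n+1)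
    rcases hxn with ⟨p, hp, rfl⟩ | ⟨q, hq, rfl⟩
    · rcases preCantorSet_subset_unitInterval' n hp with ⟨h1', h2'⟩
      exfalso; linarith
    · rw [show 3 * ((2+q)/3) - 2 = q by ring]; exact hq

lemma ofReal_third_pow_rpow (l : ℕ) :
    (ENNReal.ofReal ((1/3:ℝ)^l)) ^ cantorDim = ENNReal.ofReal ((1/2:ℝ)^l) := by
  rw [ENNReal.ofReal_rpow_of_pos (by positivity), third_pow_rpow]

lemma hausdorffMeasure_cantorSet_le : μH[cantorDim] cantorSet ≤ 1 := by
  have hle := MeasureTheory.Measure.hausdorffMeasure_le_liminf_sum (ι := fun l => ↥(cpts l))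
    cantorDim cantorSet (l := atTop) (fun l => ENNReal.ofReal ((1/3:ℝ)^l))
    (by
      rw [show (0:ℝ≥0∞) = ENNReal.ofReal 0 by simp]
      exact ENNReal.tendsto_ofReal
        (tendsto_pow_atTop_nhds_zero_of_lt_one (by norm_num) (by norm_num)))
    (fun l (b : ↥(cpts l)) => Set.Icc (b : ℝ) ((b : ℝ) + (1/3)^l))
    (Eventually.of_forall fun l b => by
      rw [Real.ediam_Icc]; simp)
    (Eventually.of_forall fun l => by
      intro x hx
      obtain ⟨b, hb, hxb⟩ := Set.mem_iUnion₂.mp (cantorSet_subset_cover l hx)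
      exact Set.mem_iUnion.mpr ⟨⟨b, hb⟩, hxb⟩)
  refine hle.trans ?_
  have hbound : ∀ l : ℕ, (∑ b : ↥(cpts l),
      Metric.ediam (Set.Icc (b:ℝ) ((b:ℝ) + (1/3)^l)) ^ cantorDim) ≤ 1 := by
    intro l
    have hterm : ∀ b : ↥(cpts l),
        Metric.ediam (Set.Icc (b:ℝ) ((b:ℝ) + (1/3)^l)) ^ cantorDim
          = ENNReal.ofReal ((1/2:ℝ)^l) := by
      intro b
      rw [Real.ediam_Icc, show (b:ℝ) + (1/3:ℝ)^l - b = (1/3:ℝ)^l by ring,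
        ofReal_third_pow_rpow]
    rw [Finset.sum_congr rfl (fun b _ => hterm b), Finset.sum_const]
    have hcard : (Finset.univ : Finset ↥(cpts l)).card = (cpts l).card := by
      simp
    rw [hcard]
    calc (cpts l).card • ENNReal.ofReal ((1/2:ℝ)^l)
        = ((cpts l).card : ℝ≥0∞) * ENNReal.ofReal ((1/2:ℝ)^l) := by
          rw [nsmul_eq_mul]
      _ ≤ (2^l : ℕ) * ENNReal.ofReal ((1/2:ℝ)^l) := by
          gcongr
          exact_mod_cast cpts_card l
      _ = ENNReal.ofReal ((2:ℝ)^l * (1/2:ℝ)^l) := by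
          rw [ENNReal.ofReal_mul (by positivity),
            ENNReal.ofReal_pow (by norm_num : (0:ℝ) ≤ 2)]
          norm_num
      _ = 1 := by
          rw [← mul_pow]; norm_num
  calc liminf _ atTop ≤ liminf (fun _ : ℕ => (1:ℝ≥0∞)) atTop :=
        liminf_le_liminf (Eventually.of_forall hbound)
    _ = 1 := liminf_const 1

lemma nnreal_third_rpow : ((3:ℝ≥0)⁻¹) ^ cantorDim = (2:ℝ≥0)⁻¹ := by
  have : (((3:ℝ≥0)⁻¹ ^ cantorDim : ℝ≥0) : ℝ) = (((2:ℝ≥0)⁻¹ : ℝ≥0) : ℝ) := by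
    rw [NNReal.coe_rpow]
    push_cast
    rw [Real.inv_rpow (by norm_num), three_rpow]
  exact_mod_cast this

lemma mu_smul_third (S : Set ℝ) :
    μH[cantorDim] ((· / 3) '' S) = 2⁻¹ * μH[cantorDim] S := by
  have himg : (· / 3) '' S = (3:ℝ)⁻¹ • S := by
    rw [← Set.image_smul]
    congr 1
    funext x
    simp [smul_eq_mul, div_eq_inv_mul]
  rw [himg, Measure.hausdorffMeasure_smul₀ (le_of_lt gamma_pos) (by norm_num : (3:ℝ)⁻¹ ≠ 0) S]
  have hnorm : ‖(3:ℝ)⁻¹‖₊ = (3:ℝ≥0)⁻¹ := by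
    simp
  rw [hnorm, nnreal_third_rpow, ENNReal.smul_def, smul_eq_mul]
  congr 1
  simp

lemma mu_smul_right (S : Set ℝ) :
    μH[cantorDim] ((fun x => (2 + x) / 3) '' S) = 2⁻¹ * μH[cantorDim] S := by
  have himg : (fun x : ℝ => (2 + x) / 3) '' S = (· / 3) '' ((fun x : ℝ => 2 + x) '' S) := by
    rw [← Set.image_comp]; rfl
  have htrans : μH[cantorDim] ((fun x : ℝ => 2 + x) '' S) = μH[cantorDim] S := by
    have : (fun x : ℝ => 2 + x) '' S = (2:ℝ) +ᵥ S := by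
      rw [← Set.image_vadd]; rfl
    rw [this]
    exact MeasureTheory.hausdorffMeasure_vadd (2:ℝ) (Or.inl (le_of_lt gamma_pos)) S
  rw [himg, mu_smul_third, htrans]

open Classical in
/-- the number of level-`l` Cantor intervals meeting `W` -/
noncomputable def cnt (l : ℕ) (W : Set ℝ) : ℕ :=
  ((cpts l).filter (fun b => (Set.Icc b (b + (1/3:ℝ)^l) ∩ W).Nonempty)).card

open Classical in
lemma cnt_succ (l : ℕ) (W : Set ℝ) :
    cnt (l+1) W = cnt l ((· / 3) ⁻¹' W) + cnt l ((fun x => (2 + x) / 3) ⁻¹' W) := by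
  classical
  unfold cnt
  rw [cpts_def_succ, Finset.filter_union]
  rw [Finset.card_union_of_disjoint]
  · congr 1
    · rw [Finset.filter_image]
      rw [Finset.card_image_of_injective _ (fun a b h => by have h' : a / 3 = b / 3 := h; linarith)]
      congr 1
      apply Finset.filter_congr
      intro a ha
      show (Set.Icc (a/3) (a/3 + (1/3:ℝ)^(l+1)) ∩ W).Nonempty ↔
        (Set.Icc a (a + (1/3:ℝ)^l) ∩ ((· / 3) ⁻¹' W)).Nonempty
      constructor
      · rintro ⟨x, ⟨hx1, hx2⟩, hxW⟩
        refine ⟨3 * x, ⟨⟨by linarith, ?_⟩, ?_⟩⟩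
        · have := pow_succ ((1:ℝ)/3) l; nlinarith
        · simp only [Set.mem_preimage]
          rw [show 3 * x / 3 = x by ring]
          exact hxW
      · rintro ⟨x, ⟨hx1, hx2⟩, hxW⟩
        refine ⟨x / 3, ⟨⟨by linarith, ?_⟩, hxW⟩⟩
        have := pow_succ ((1:ℝ)/3) l; nlinarith
    · rw [Finset.filter_image]
      rw [Finset.card_image_of_injective _ (fun a b h => by have h' : (2 + a) / 3 = (2 + b) / 3 := h; linarith)]
      congr 1
      apply Finset.filter_congr
      intro a ha
      show (Set.Icc ((2+a)/3) ((2+a)/3 + (1/3:ℝ)^(l+1)) ∩ W).Nonempty ↔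
        (Set.Icc a (a + (1/3:ℝ)^l) ∩ ((fun x => (2 + x) / 3) ⁻¹' W)).Nonempty
      constructor
      · rintro ⟨x, ⟨hx1, hx2⟩, hxW⟩
        refine ⟨3 * x - 2, ⟨⟨by linarith, ?_⟩, ?_⟩⟩
        · have := pow_succ ((1:ℝ)/3) l; nlinarith
        · simp only [Set.mem_preimage]
          rw [show 2 + (3 * x - 2) = 3 * x by ring, show 3 * x / 3 = x by ring]
          exact hxW
      · rintro ⟨x, ⟨hx1, hx2⟩, hxW⟩
        refine ⟨(2 + x) / 3, ⟨⟨by linarith, ?_⟩, hxW⟩⟩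
        have := pow_succ ((1:ℝ)/3) l; nlinarith
  · refine Finset.disjoint_filter_filter ?_
    rw [Finset.disjoint_left]
    rintro b hb hb'
    obtain ⟨a, ha, rfl⟩ := Finset.mem_image.mp hb
    obtain ⟨a', ha', heq⟩ := Finset.mem_image.mp hb'
    have h1 := (cpts_mem_Icc l a ha).2
    have h2 := (cpts_mem_Icc l a' ha').1
    have hp : (0:ℝ) < (1/3)^l := by positivity
    nlinarith [heq]

lemma mu_cap_le : ∀ (l : ℕ) (W : Set ℝ),
    μH[cantorDim] (cantorSet ∩ W) ≤ (cnt l W : ℝ≥0∞) * (2⁻¹ : ℝ≥0∞) ^ l := by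
  intro l
  induction l with
  | zero =>
    intro W
    classical
    unfold cnt
    rw [cpts_def_zero]
    by_cases h : (Set.Icc (0:ℝ) (0 + (1/3:ℝ)^0) ∩ W).Nonempty
    · have : ({(0:ℝ)} : Finset ℝ).filter
          (fun b => (Set.Icc b (b + (1/3:ℝ)^0) ∩ W).Nonempty) = {0} := by
        rw [Finset.filter_eq_self]
        intro b hb
        rw [Finset.mem_singleton] at hb
        subst hb; exact h
      rw [this]
      simp only [Finset.card_singleton, Nat.cast_one, pow_zero, one_mul, mul_one]
      exact (measure_mono Set.inter_subset_left).trans hausdorffMeasure_cantorSet_le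
    · have hempty : cantorSet ∩ W = ∅ := by
        rw [Set.eq_empty_iff_forall_notMem]
        intro x ⟨hxC, hxW⟩
        exact h ⟨x, by simpa using cantorSet_subset_unitInterval hxC, hxW⟩
      rw [hempty]
      simp
  | succ l ih =>
    intro W
    set f : ℝ → ℝ := (· / 3)
    set g : ℝ → ℝ := fun x => (2 + x) / 3
    calc μH[cantorDim] (cantorSet ∩ W)
        ≤ μH[cantorDim] ((f '' cantorSet ∩ W) ∪ (g '' cantorSet ∩ W)) := by
          apply measure_mono
          rw [← Set.union_inter_distrib_right]
          exact Set.inter_subset_inter_left W cantorSet_selfSimilar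
      _ ≤ μH[cantorDim] (f '' cantorSet ∩ W) + μH[cantorDim] (g '' cantorSet ∩ W) :=
          measure_union_le _ _
      _ = μH[cantorDim] (f '' (cantorSet ∩ f ⁻¹' W))
          + μH[cantorDim] (g '' (cantorSet ∩ g ⁻¹' W)) := by
          rw [Set.image_inter_preimage, Set.image_inter_preimage]
      _ = 2⁻¹ * μH[cantorDim] (cantorSet ∩ f ⁻¹' W)
          + 2⁻¹ * μH[cantorDim] (cantorSet ∩ g ⁻¹' W) := by
          rw [mu_smul_third, mu_smul_right]
      _ ≤ 2⁻¹ * ((cnt l (f ⁻¹' W) : ℝ≥0∞) * (2⁻¹ : ℝ≥0∞) ^ l)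
          + 2⁻¹ * ((cnt l (g ⁻¹' W) : ℝ≥0∞) * (2⁻¹ : ℝ≥0∞) ^ l) := by
          gcongr
          · exact ih _
          · exact ih _
      _ = ((cnt l (f ⁻¹' W) + cnt l (g ⁻¹' W) : ℕ) : ℝ≥0∞) * (2⁻¹ : ℝ≥0∞) ^ (l+1) := by
          push_cast
          ring
      _ = ((cnt (l+1) W : ℕ) : ℝ≥0∞) * (2⁻¹ : ℝ≥0∞) ^ (l+1) := by
          rw [cnt_succ]

/-- counting separated points in an interval -/
lemma sep_card (S : Finset ℝ) (u L δ : ℝ) (hδ : 0 < δ) (N : ℕ)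
    (hmem : ∀ b ∈ S, u ≤ b ∧ b ≤ u + L)
    (hsep : ∀ b ∈ S, ∀ b' ∈ S, b ≠ b' → δ ≤ |b - b'|)
    (hN : L < N * δ) : S.card ≤ N := by
  have key : S.card ≤ (Finset.range N).card := by
    apply Finset.card_le_card_of_injOn (fun b => ⌊(b - u)/δ⌋₊)
    · intro b hb
      rcases hmem b hb with ⟨h1, h2⟩
      simp only [Finset.coe_range, Set.mem_Iio]
      have hlt : (b - u)/δ < N := by rw [div_lt_iff₀ hδ]; nlinarith
      exact (Nat.floor_lt (div_nonneg (by linarith) hδ.le)).mpr hlt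
    · intro b hb b' hb' heq
      by_contra hne
      have hs := hsep b hb b' hb' hne
      rcases hmem b hb with ⟨h1, h2⟩
      rcases hmem b' hb' with ⟨h1', h2'⟩
      simp only at heq
      set x := (b - u)/δ with hx
      set x' := (b' - u)/δ with hx'
      have hx0 : 0 ≤ x := div_nonneg (by linarith) hδ.le
      have hx0' : 0 ≤ x' := div_nonneg (by linarith) hδ.le
      have e1 : (⌊x⌋₊ : ℝ) ≤ x := Nat.floor_le hx0
      have e2 : x < ⌊x⌋₊ + 1 := Nat.lt_floor_add_one x
      have e1' : (⌊x'⌋₊ : ℝ) ≤ x' := Nat.floor_le hx0'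
      have e2' : x' < ⌊x'⌋₊ + 1 := Nat.lt_floor_add_one x'
      have hq : (⌊x⌋₊ : ℝ) = (⌊x'⌋₊ : ℝ) := by exact_mod_cast congrArg Nat.cast heq
      have hxb : b - u = δ * x := by rw [hx]; field_simp
      have hxb' : b' - u = δ * x' := by rw [hx']; field_simp
      have habs : |b - b'| < δ := by
        rw [abs_lt]
        constructor <;> nlinarith
      linarith
  simpa using key

lemma int_Icc_card_le (x : ℝ) : (Finset.Icc ⌈x - 5⌉ ⌊x + 5⌋).card ≤ 11 := by
  rw [Int.card_Icc]
  have h1 : (⌊x + 5⌋ : ℝ) ≤ x + 5 := Int.floor_le _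
  have h2 : x - 5 ≤ (⌈x - 5⌉ : ℝ) := Int.le_ceil _
  have : (⌊x + 5⌋ + 1 - ⌈x - 5⌉ : ℤ) ≤ 11 := by
    have : ((⌊x + 5⌋ + 1 - ⌈x - 5⌉ : ℤ) : ℝ) ≤ 11 := by push_cast; linarith
    exact_mod_cast this
  omega

end Aux

set_option maxHeartbeats 2000000 in
theorem stmt5 :
    ∃ c : ℝ, 0 < c ∧ ∀ (y : ℝ) (n : ℕ) (σ : ℝ), 0 < σ → σ < 1 / 2 →
      (cantorMeasure (approxSet n y σ)).toReal ≤ c * σ ^ cantorDim := by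
  classical
  refine ⟨176, by norm_num, ?_⟩
  intro y n σ hσ hσ2
  set γ := cantorDim with hγdef
  have hγ0 : 0 < γ := gamma_pos
  have hγ1 : γ < 1 := gamma_lt_one
  set A := approxSet n y σ with hA
  have h2n : (0:ℝ) < (2:ℝ)^n := by positivity
  have h2ninv : ((2:ℝ)^n) * ((1/2:ℝ)^n) = 1 := by rw [← mul_pow]; norm_num
  set t : ℝ := 2 * σ * (1/2)^n with ht
  have ht0 : 0 < t := by positivity
  have ht1 : t < 1 := by
    have h1 : ((1:ℝ)/2)^n ≤ 1 := pow_le_one₀ (by norm_num) (by norm_num)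
    have h2 : ((0:ℝ)) < (1/2:ℝ)^n := by positivity
    nlinarith
  -- level j
  set j := ⌈(n:ℝ) * γ⌉₊ with hj
  have hj1 : ((1:ℝ)/3)^j ≤ (1/2:ℝ)^n := by
    calc ((1:ℝ)/3)^j = ((1:ℝ)/3) ^ (j:ℝ) := (Real.rpow_natCast _ j).symm
      _ ≤ ((1:ℝ)/3) ^ ((n:ℝ) * γ) :=
          Real.rpow_le_rpow_of_exponent_ge (by norm_num) (by norm_num) (Nat.le_ceil _)
      _ = (((1:ℝ)/3) ^ γ) ^ (n:ℝ) := by rw [mul_comm (n:ℝ) γ, Real.rpow_mul (by norm_num)]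
      _ = ((1:ℝ)/2) ^ (n:ℝ) := by rw [third_rpow]
      _ = ((1:ℝ)/2) ^ n := Real.rpow_natCast _ n
  have hj2 : ((2:ℝ))^j ≤ 2 * (2:ℝ)^((n:ℝ) * γ) := by
    have hcl : (j:ℝ) ≤ (n:ℝ)*γ + 1 := by
      have h := Nat.ceil_lt_add_one (by positivity : (0:ℝ) ≤ (n:ℝ)*γ)
      linarith
    calc (2:ℝ)^j = (2:ℝ) ^ (j:ℝ) := (Real.rpow_natCast _ j).symm
      _ ≤ (2:ℝ) ^ ((n:ℝ)*γ + 1) := Real.rpow_le_rpow_of_exponent_le (by norm_num) hcl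
      _ = 2 * (2:ℝ)^((n:ℝ)*γ) := by rw [Real.rpow_add (by norm_num), Real.rpow_one]; ring
  -- level m
  have hti : 1 ≤ t⁻¹ := by
    have h1 := mul_inv_cancel₀ ht0.ne'
    have h2 : 0 < t⁻¹ := inv_pos.mpr ht0
    nlinarith
  set L3 := Real.logb 3 t⁻¹ with hL3
  have hL30 : 0 ≤ L3 := Real.logb_nonneg (by norm_num) hti
  set m := ⌊L3⌋₊ with hm
  have hrpow3L : (3:ℝ) ^ L3 = t⁻¹ := Real.rpow_logb (by norm_num) (by norm_num) (inv_pos.mpr ht0)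
  have hthirdL3 : ((1:ℝ)/3) ^ L3 = t := by
    rw [one_div, Real.inv_rpow (by norm_num), hrpow3L, inv_inv]
  have hm1 : t ≤ (1/3:ℝ)^m := by
    rw [← hthirdL3, ← Real.rpow_natCast ((1:ℝ)/3) m]
    exact Real.rpow_le_rpow_of_exponent_ge (by norm_num) (by norm_num) (Nat.floor_le hL30)
  have hm1' : ((1:ℝ)/3)^m < 3 * t := by
    have hlt : ((1:ℝ)/3) ^ ((m:ℝ)+1) < ((1:ℝ)/3) ^ L3 :=
      Real.rpow_lt_rpow_of_exponent_gt (by norm_num) (by norm_num) (Nat.lt_floor_add_one L3)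
    rw [hthirdL3] at hlt
    have he : ((1:ℝ)/3) ^ ((m:ℝ)+1) = (1/3:ℝ)^m * (1/3) := by
      rw [Real.rpow_add (by norm_num), Real.rpow_one, Real.rpow_natCast]
    rw [he] at hlt
    linarith
  have hhalfL3 : ((1:ℝ)/2) ^ L3 = t ^ γ := by
    rw [← third_rpow, ← Real.rpow_mul (by norm_num), mul_comm γ L3,
      Real.rpow_mul (by norm_num), hthirdL3]
  have hm2 : ((1:ℝ)/2)^m ≤ 2 * t ^ γ := by
    calc ((1:ℝ)/2)^m = ((1:ℝ)/2)^(m:ℝ) := (Real.rpow_natCast _ m).symm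
      _ ≤ ((1:ℝ)/2)^(L3 - 1) :=
          Real.rpow_le_rpow_of_exponent_ge (by norm_num) (by norm_num)
            (by linarith [Nat.lt_floor_add_one L3])
      _ = 2 * t^γ := by
          rw [Real.rpow_sub (by norm_num), Real.rpow_one, hhalfL3]; ring
  -- the counting
  set F := (cpts m).filter (fun b => (Set.Icc b (b + (1/3:ℝ)^m) ∩ A).Nonempty) with hF
  have hcntA : cnt m A = F.card := by rw [hF]; rfl
  have hchoice : ∀ b : ℝ, ∃ x : ℝ, b ∈ F → (x ∈ Set.Icc b (b + (1/3:ℝ)^m) ∧ x ∈ A) := by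
    intro b
    by_cases hb : b ∈ F
    · obtain ⟨x, hx⟩ := (Finset.mem_filter.mp hb).2
      exact ⟨x, fun _ => ⟨hx.1, hx.2⟩⟩
    · exact ⟨0, fun h => absurd h hb⟩
  choose xf hxf using hchoice
  have hmemA : ∀ x : ℝ, x ∈ A → |(2:ℝ)^n * x - y - ((round ((2:ℝ)^n * x - y) : ℤ) : ℝ)| < σ := by
    intro x hx
    exact hx
  set kmap : ℝ → ℤ := fun b => round ((2:ℝ)^n * xf b - y) with hkmap
  set T : Finset ℤ := (cpts j).biUnion
    (fun a => Finset.Icc ⌈(2:ℝ)^n * a - y - 5⌉ ⌊(2:ℝ)^n * a - y + 5⌋) with hT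
  have h2nm : (2:ℝ)^n * (1/3:ℝ)^m ≤ 6 * σ := by
    have h2 : (2:ℝ)^n * (1/3:ℝ)^m ≤ (2:ℝ)^n * (3 * t) :=
      mul_le_mul_of_nonneg_left hm1'.le h2n.le
    have e6 : (2:ℝ)^n * (3 * t) = 6 * σ := by
      rw [ht, show (2:ℝ)^n * (3*(2*σ*(1/2:ℝ)^n)) = 6*σ*((2:ℝ)^n*(1/2:ℝ)^n) from by ring,
        h2ninv, mul_one]
    linarith
  have h2nj : (2:ℝ)^n * (1/3:ℝ)^j ≤ 1 := by
    have h2 : (2:ℝ)^n * (1/3:ℝ)^j ≤ (2:ℝ)^n * (1/2:ℝ)^n :=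
      mul_le_mul_of_nonneg_left hj1 h2n.le
    linarith [h2ninv]
  have himg : F.image kmap ⊆ T := by
    intro k hk
    obtain ⟨b, hbF, rfl⟩ := Finset.mem_image.mp hk
    have hbm : b ∈ cpts m := (Finset.mem_filter.mp hbF).1
    obtain ⟨hx1, hx2⟩ := hxf b hbF
    obtain ⟨a, ha, hba⟩ := Set.mem_iUnion₂.mp
      (cantorSet_subset_cover j (cpts_subset_cantorSet m b hbm))
    rw [hT, Finset.mem_biUnion]
    refine ⟨a, ha, ?_⟩
    rw [Finset.mem_Icc]
    have hnint : |(2:ℝ)^n * xf b - y - ((kmap b : ℤ) : ℝ)| < σ := hmemA _ hx2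
    rcases abs_lt.mp hnint with ⟨hn1, hn2⟩
    have hb1 : b ≤ xf b := hx1.1
    have hb2 : xf b ≤ b + (1/3:ℝ)^m := hx1.2
    have ha1 : a ≤ b := hba.1
    have ha2 : b ≤ a + (1/3:ℝ)^j := hba.2
    constructor
    · apply Int.ceil_le.mpr
      push_cast
      nlinarith [mul_le_mul_of_nonneg_left (show a ≤ xf b by linarith) h2n.le]
    · apply Int.le_floor.mpr
      push_cast
      nlinarith [mul_le_mul_of_nonneg_left
        (show xf b ≤ a + ((1/3:ℝ)^m + (1/3:ℝ)^j) by linarith) h2n.le]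
  have hfiber : ∀ k ∈ F.image kmap, (F.filter (fun b => kmap b = k)).card ≤ 2 := by
    intro k hk
    refine sep_card _ (((k:ℝ) + y - σ) * (1/2:ℝ)^n - (1/3:ℝ)^m) (t + (1/3:ℝ)^m)
      (2 * (1/3:ℝ)^m) (by positivity) 2 ?_ ?_ ?_
    · intro b hb
      obtain ⟨hbF, hbk⟩ := Finset.mem_filter.mp hb
      obtain ⟨hx1, hx2⟩ := hxf b hbF
      have hnint : |(2:ℝ)^n * xf b - y - ((kmap b : ℤ) : ℝ)| < σ := hmemA _ hx2
      have hrk : ((kmap b : ℤ) : ℝ) = (k:ℝ) := by rw [hbk]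
      rw [hrk] at hnint
      rcases abs_lt.mp hnint with ⟨hn1, hn2⟩
      have hp2 : (0:ℝ) < (1/2:ℝ)^n := by positivity
      have hxfu : xf b < ((k:ℝ) + y + σ) * (1/2:ℝ)^n := by
        have h := mul_lt_mul_of_pos_right
          (show (2:ℝ)^n * xf b < (k:ℝ) + y + σ by linarith) hp2
        calc xf b = (2:ℝ)^n * xf b * (1/2:ℝ)^n := by
              rw [show (2:ℝ)^n * xf b * (1/2:ℝ)^n = xf b * ((2:ℝ)^n * (1/2:ℝ)^n) from by ring,
                h2ninv, mul_one]
          _ < _ := h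
      have hxfl : ((k:ℝ) + y - σ) * (1/2:ℝ)^n < xf b := by
        have h := mul_lt_mul_of_pos_right
          (show (k:ℝ) + y - σ < (2:ℝ)^n * xf b by linarith) hp2
        calc ((k:ℝ) + y - σ) * (1/2:ℝ)^n < (2:ℝ)^n * xf b * (1/2:ℝ)^n := h
          _ = xf b := by
              rw [show (2:ℝ)^n * xf b * (1/2:ℝ)^n = xf b * ((2:ℝ)^n * (1/2:ℝ)^n) from by ring,
                h2ninv, mul_one]
      have heq : ((k:ℝ) + y + σ) * (1/2:ℝ)^n = ((k:ℝ) + y - σ) * (1/2:ℝ)^n + t := by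
        rw [ht]; ring
      exact ⟨by linarith [hx1.1, hx1.2], by linarith [hx1.1, hx1.2]⟩
    · intro b hb b' hb' hne
      exact cpts_sep m b (Finset.mem_filter.mp (Finset.mem_filter.mp hb).1).1
        b' (Finset.mem_filter.mp (Finset.mem_filter.mp hb').1).1 hne
    · have hp3 : (0:ℝ) < (1/3:ℝ)^m := by positivity
      linarith
  have hcard : (cnt m A : ℝ) ≤ 22 * 2^j := by
    have hc : cnt m A ≤ 22 * 2^j := by
      rw [hcntA]
      calc F.card ≤ 2 * (F.image kmap).card := Finset.card_le_mul_card_image F 2 hfiber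
        _ ≤ 2 * T.card := by
            have := Finset.card_le_card himg
            omega
        _ ≤ 2 * ((cpts j).card * 11) := by
            have hTle : T.card ≤ (cpts j).card * 11 := by
              rw [hT]
              refine (Finset.card_biUnion_le).trans ?_
              calc (∑ a ∈ cpts j, (Finset.Icc ⌈(2:ℝ)^n * a - y - 5⌉ ⌊(2:ℝ)^n * a - y + 5⌋).card)
                  ≤ ∑ _a ∈ cpts j, 11 :=
                    Finset.sum_le_sum (fun a _ => int_Icc_card_le ((2:ℝ)^n * a - y))
                _ = (cpts j).card * 11 := by rw [Finset.sum_const, smul_eq_mul]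
            omega
        _ ≤ 2 * (2^j * 11) := by
            have := cpts_card j
            omega
        _ = 22 * 2^j := by ring
    exact_mod_cast hc
  -- numeric conclusion
  have htγ : (0:ℝ) ≤ t^γ := Real.rpow_nonneg ht0.le γ
  have ht4 : (2:ℝ)^((n:ℝ)*γ) * t ^ γ = (2*σ)^γ := by
    rw [ht, show (2*σ*(1/2:ℝ)^n) = (2*σ) * (1/2:ℝ)^n from rfl,
      Real.mul_rpow (by positivity) (by positivity)]
    have hhn : (((1:ℝ)/2)^n : ℝ) ^ γ = ((2:ℝ)^((n:ℝ)*γ))⁻¹ := by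
      rw [← Real.rpow_natCast ((1:ℝ)/2) n, ← Real.rpow_mul (by norm_num), one_div,
        Real.inv_rpow (by norm_num)]
    rw [hhn]
    have hne : ((2:ℝ)^((n:ℝ)*γ)) ≠ 0 := by positivity
    field_simp
  have ht5 : ((2:ℝ)*σ)^γ ≤ 2 * σ^γ := by
    rw [Real.mul_rpow (by norm_num) hσ.le]
    have h2γ : (2:ℝ)^γ ≤ 2 := by
      have h := Real.rpow_le_rpow_of_exponent_le (by norm_num : (1:ℝ) ≤ 2) hγ1.le
      rwa [Real.rpow_one] at h
    have hσγ : (0:ℝ) ≤ σ^γ := Real.rpow_nonneg hσ.le γ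
    nlinarith
  have hfinal : ((cnt m A : ℝ)) * (1/2:ℝ)^m ≤ 176 * σ ^ γ := by
    have h2 : (0:ℝ) ≤ (1/2:ℝ)^m := by positivity
    have h3 : ((cnt m A : ℝ)) * (1/2:ℝ)^m ≤ (22 * 2^j) * (2 * t^γ) :=
      mul_le_mul hcard hm2 h2 (by positivity)
    have h4 : (22 * (2:ℝ)^j) * (2 * t^γ) ≤ (22 * (2 * (2:ℝ)^((n:ℝ)*γ))) * (2 * t^γ) := by
      have := mul_le_mul_of_nonneg_right hj2 (by positivity : (0:ℝ) ≤ 2 * t^γ)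
      nlinarith [this]
    have h5 : (22 * (2 * (2:ℝ)^((n:ℝ)*γ))) * (2 * t^γ) = 88 * ((2:ℝ)^((n:ℝ)*γ) * t^γ) := by
      ring
    calc ((cnt m A : ℝ)) * (1/2:ℝ)^m ≤ (22 * 2^j) * (2 * t^γ) := h3
      _ ≤ (22 * (2 * (2:ℝ)^((n:ℝ)*γ))) * (2 * t^γ) := h4
      _ = 88 * ((2:ℝ)^((n:ℝ)*γ) * t^γ) := h5
      _ = 88 * (2*σ)^γ := by rw [ht4]
      _ ≤ 176 * σ^γ := by nlinarith [ht5]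
  -- measure conclusion
  have hmeas : cantorMeasure A = μH[γ] (cantorSet ∩ A) := by
    rw [cantorMeasure, Measure.restrict_apply' isClosed_cantorSet.measurableSet, Set.inter_comm]
  have henn : μH[γ] (cantorSet ∩ A) ≤ ENNReal.ofReal (176 * σ ^ γ) := by
    refine (mu_cap_le m A).trans ?_
    have e1 : ((cnt m A : ℝ≥0∞)) * (2⁻¹:ℝ≥0∞)^m = ENNReal.ofReal ((cnt m A : ℝ) * (1/2:ℝ)^m) := by
      rw [ENNReal.ofReal_mul (by positivity)]
      congr 1
      · rw [ENNReal.ofReal_natCast]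
      · rw [ENNReal.ofReal_pow (by norm_num)]
        congr 1
        rw [show (1/2:ℝ) = (2:ℝ)⁻¹ by norm_num, ENNReal.ofReal_inv_of_pos (by norm_num)]
        norm_num
    rw [e1]
    exact ENNReal.ofReal_le_ofReal hfinal
  rw [hmeas]
  exact ENNReal.toReal_le_of_le_ofReal (by positivity) henn
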